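/- arXiv:1810.06895 — 5 statements merged into one kernel-verified Lean document; each statement's English description precedes it below -/
import Mathlib

section
/- Let α ≥ 0 and β > 0, and let X be a real random variable whose distribution is the Modified Rician distribution MR(α,β). Then X is sub-exponential: there exists a finite constant K (possibly depending on α and β) such that for every real p ≥ 1, (E|X|^p)^{1/p} ≤ Kp; equivalently ‖X‖_{ψ₁} < ∞. -/
open MeasureTheory ProbabilityTheory Real
open scoped ENNReal NNReal

/-- The modified Bessel function of the first kind of order zero,
`I₀(x) = ∑_{k=0}^∞ (x/2)^{2k} / (k!)²`. -/
noncomputable def besselI0 (x : ℝ) : ℝ :=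
  ∑' k : ℕ, (x / 2) ^ (2 * k) / ((Nat.factorial k : ℝ)) ^ 2

lemma besselI0_summable (x : ℝ) :
    Summable (fun k : ℕ => (x / 2) ^ (2 * k) / ((Nat.factorial k : ℝ)) ^ 2) := by
  refine Summable.of_nonneg_of_le (fun k => by rw [pow_mul]; positivity) (fun k => ?_)
    (Real.summable_pow_div_factorial (x ^ 2 / 4))
  have h1 : (1 : ℝ) ≤ (Nat.factorial k : ℝ) := Nat.one_le_cast.mpr k.factorial_pos
  rw [pow_mul]
  have h2 : ((x / 2) ^ 2 : ℝ) = x ^ 2 / 4 := by ring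
  rw [h2]
  gcongr
  nlinarith

lemma besselI0_measurable : Measurable besselI0 := by
  apply measurable_of_tendsto_metrizable
    (f := fun n x => ∑ k ∈ Finset.range n, (x / 2) ^ (2 * k) / ((Nat.factorial k : ℝ)) ^ 2)
  · intro n
    apply Finset.measurable_sum
    intro k _
    exact (((measurable_id.div_const 2).pow_const _).div_const _)
  · rw [tendsto_pi_nhds]
    intro x
    exact (besselI0_summable x).hasSum.tendsto_sum_nat

lemma besselI0_le_exp (x : ℝ) (hx : 0 ≤ x) : besselI0 x ≤ Real.exp x := by
  have hexp : Real.exp x = ∑' n : ℕ, x ^ n / (Nat.factorial n : ℝ) := by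
    rw [Real.exp_eq_exp_ℝ, NormedSpace.exp_eq_tsum_div]
  rw [hexp]
  unfold besselI0
  apply Summable.tsum_le_tsum_of_inj (fun k : ℕ => 2 * k) (fun a b h => Nat.eq_of_mul_eq_mul_left (by norm_num) h)
  · intro c _
    positivity
  · intro k
    have hfact : ((2 * k).factorial : ℝ) ≤ 2 ^ (2 * k) * ((Nat.factorial k : ℝ)) ^ 2 := by
      have hchoose : Nat.choose (2 * k) k ≤ 2 ^ (2 * k) := by
        calc Nat.choose (2 * k) k ≤ ∑ m ∈ Finset.range (2 * k + 1), Nat.choose (2 * k) m :=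
              Finset.single_le_sum (f := fun m => Nat.choose (2 * k) m)
                (fun _ _ => Nat.zero_le _) (Finset.mem_range.mpr (by omega))
          _ = 2 ^ (2 * k) := Nat.sum_range_choose (2 * k)
      have heq : Nat.choose (2 * k) k * Nat.factorial k * Nat.factorial k
          = Nat.factorial (2 * k) := by
        have := Nat.choose_mul_factorial_mul_factorial (show k ≤ 2 * k by omega)
        simpa [two_mul, Nat.add_sub_cancel] using this
      have : Nat.factorial (2 * k) ≤ 2 ^ (2 * k) * (Nat.factorial k * Nat.factorial k) := by
        rw [← heq]
        have := Nat.mul_le_mul_right (Nat.factorial k * Nat.factorial k) hchoose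
        calc Nat.choose (2 * k) k * Nat.factorial k * Nat.factorial k
            = Nat.choose (2 * k) k * (Nat.factorial k * Nat.factorial k) := by ring
          _ ≤ 2 ^ (2 * k) * (Nat.factorial k * Nat.factorial k) := this
      calc ((2 * k).factorial : ℝ) ≤ ((2 ^ (2 * k) * (Nat.factorial k * Nat.factorial k) : ℕ) : ℝ) :=
            by exact_mod_cast this
        _ = 2 ^ (2 * k) * ((Nat.factorial k : ℝ)) ^ 2 := by push_cast; ring
    rw [div_pow, div_div]
    have hx2 : (0:ℝ) ≤ x ^ (2 * k) := by rw [pow_mul]; positivity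
    have hfp : (0:ℝ) < ((2 * k).factorial : ℝ) := by exact_mod_cast Nat.factorial_pos _
    exact div_le_div_of_nonneg_left hx2 hfp hfact
  · exact besselI0_summable x
  · exact Real.summable_pow_div_factorial x

/-- The Modified Rician density with parameters `α ≥ 0` and `β > 0`:
`p_MR(t) = (1/β) exp(-(t+α)/β) I₀(2√(tα)/β)` for `t ≥ 0`, and `0` for `t < 0`. -/
noncomputable def mrDensity (α β t : ℝ) : ℝ :=
  if 0 ≤ t then (1 / β) * Real.exp (-((t + α) / β)) * besselI0 (2 * Real.sqrt (t * α) / β)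
  else 0

lemma mrDensity_measurable (α β : ℝ) : Measurable (mrDensity α β) := by
  unfold mrDensity
  apply Measurable.ite measurableSet_Ici
  · apply Measurable.mul
    · exact (measurable_id.add_const α |>.div_const β |>.neg).exp.const_mul (1 / β)
    · exact besselI0_measurable.comp
        ((((measurable_id.mul_const α).sqrt).const_mul 2).div_const β)
  · exact measurable_const

lemma mrDensity_le (α β : ℝ) (hα : 0 ≤ α) (hβ : 0 < β) (t : ℝ) (ht : 0 ≤ t) :
    mrDensity α β t ≤ (1 / β) * Real.exp (α / β) * Real.exp (-(t / (2 * β))) := by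
  unfold mrDensity
  rw [if_pos ht]
  have hb : besselI0 (2 * Real.sqrt (t * α) / β) ≤ Real.exp (2 * Real.sqrt (t * α) / β) :=
    besselI0_le_exp _ (by positivity)
  calc (1 / β) * Real.exp (-((t + α) / β)) * besselI0 (2 * Real.sqrt (t * α) / β)
      ≤ (1 / β) * Real.exp (-((t + α) / β)) * Real.exp (2 * Real.sqrt (t * α) / β) := by
        apply mul_le_mul_of_nonneg_left hb (by positivity)
    _ = (1 / β) * Real.exp ((2 * Real.sqrt (t * α) - (t + α)) / β) := by
        rw [mul_assoc, ← Real.exp_add]; congr 1; field_simp; ring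
    _ ≤ (1 / β) * Real.exp ((α - t / 2) / β) := by
        apply mul_le_mul_of_nonneg_left _ (by positivity)
        apply Real.exp_le_exp.mpr
        apply (div_le_div_iff_of_pos_right hβ).mpr
        have hs : Real.sqrt (t * α) = Real.sqrt t * Real.sqrt α := Real.sqrt_mul ht α
        nlinarith [sq_nonneg (Real.sqrt t - 2 * Real.sqrt α), Real.sq_sqrt ht, Real.sq_sqrt hα,
          Real.sqrt_nonneg t, Real.sqrt_nonneg α]
    _ = (1 / β) * Real.exp (α / β) * Real.exp (-(t / (2 * β))) := by
        rw [mul_assoc, ← Real.exp_add]; congr 2; field_simp; ring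

/-- A Modified Rician random variable `X ∼ MR(α,β)` is sub-exponential: there is a
finite constant `K` such that `(E|X|^p)^{1/p} ≤ Kp` for every real `p ≥ 1`. -/
theorem mr_subexponential
    {Ω : Type*} [MeasurableSpace Ω] (P : Measure Ω) [IsProbabilityMeasure P]
    (α β : ℝ) (hα : 0 ≤ α) (hβ : 0 < β)
    (X : Ω → ℝ) (hX : Measurable X)
    (hlaw : Measure.map X P
      = (volume : Measure ℝ).withDensity (fun t => ENNReal.ofReal (mrDensity α β t))) :
    ∃ K : ℝ, ∀ p : ℝ, 1 ≤ p → (∫ ω, |X ω| ^ p ∂P) ^ (1 / p) ≤ K * p := by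
  refine ⟨16 * β * Real.exp (α / β), ?_⟩
  intro p hp
  have hp0 : (0:ℝ) < p := lt_of_lt_of_le one_pos hp
  have hmg : Measurable fun t : ℝ => |t| ^ p :=
    ((Real.continuous_rpow_const hp0.le).comp continuous_abs).measurable
  have hf : Measurable fun t => (mrDensity α β t).toNNReal :=
    (mrDensity_measurable α β).real_toNNReal
  set h : ℝ → ℝ := fun t => ((mrDensity α β t).toNNReal : ℝ) * |t| ^ p with hh
  have h1 : ∫ ω, |X ω| ^ p ∂P = ∫ t, h t := by
    rw [← integral_map hX.aemeasurable hmg.aestronglyMeasurable, hlaw]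
    rw [show (fun t => ENNReal.ofReal (mrDensity α β t))
        = (fun t => ((mrDensity α β t).toNNReal : ℝ≥0∞)) from rfl]
    rw [integral_withDensity_eq_integral_smul hf]
    simp only [NNReal.smul_def, smul_eq_mul]
    rfl
  have hmeash : Measurable h := (hf.coe_nnreal_real).mul hmg
  set b : ℝ := 1 / (4 * β) with hbdef
  have hbpos : 0 < b := by positivity
  set M : ℝ := (1 / β) * Real.exp (α / β) * (4 * β * p) ^ p with hM
  have hbound : ∀ t ∈ Set.Ioi (0:ℝ), h t ≤ M * Real.exp (-(b * t)) := by
    intro t ht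
    have ht0 : (0:ℝ) ≤ t := le_of_lt ht
    have hd : ((mrDensity α β t).toNNReal : ℝ)
        ≤ (1 / β) * Real.exp (α / β) * Real.exp (-(t / (2 * β))) := by
      rw [Real.coe_toNNReal']
      exact max_le (mrDensity_le α β hα hβ t ht0) (by positivity)
    have hrp : |t| ^ p ≤ (4 * β * p) ^ p * Real.exp (t / (4 * β)) := by
      rw [abs_of_nonneg ht0]
      have h4 : (0:ℝ) < 4 * β * p := by positivity
      have hu : t ≤ 4 * β * p * Real.exp (t / (4 * β * p)) := by
        have h3 := Real.add_one_le_exp (t / (4 * β * p))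
        have h5 : t / (4 * β * p) * (4 * β * p) = t := div_mul_cancel₀ t h4.ne'
        nlinarith [mul_le_mul_of_nonneg_right h3 h4.le]
      calc t ^ p ≤ (4 * β * p * Real.exp (t / (4 * β * p))) ^ p :=
            Real.rpow_le_rpow ht0 hu hp0.le
        _ = (4 * β * p) ^ p * (Real.exp (t / (4 * β * p))) ^ p :=
            Real.mul_rpow (by positivity) (Real.exp_pos _).le
        _ = (4 * β * p) ^ p * Real.exp (t / (4 * β)) := by
            rw [← Real.exp_mul]
            congr 2
            field_simp
    calc h t ≤ ((1 / β) * Real.exp (α / β) * Real.exp (-(t / (2 * β))))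
          * ((4 * β * p) ^ p * Real.exp (t / (4 * β))) := by
          exact mul_le_mul hd hrp (by positivity) (by positivity)
      _ = M * (Real.exp (-(t / (2 * β))) * Real.exp (t / (4 * β))) := by rw [hM]; ring
      _ = M * Real.exp (-(b * t)) := by
          congr 1
          rw [← Real.exp_add]
          congr 1
          rw [hbdef]
          field_simp
          ring
  have hbint : IntegrableOn (fun t => M * Real.exp (-(b * t))) (Set.Ioi 0) := by
    have := (exp_neg_integrableOn_Ioi 0 hbpos).const_mul M
    simpa [neg_mul, IntegrableOn] using this
  have hinth : IntegrableOn h (Set.Ioi 0) := by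
    apply Integrable.mono' hbint hmeash.aestronglyMeasurable
    filter_upwards [ae_restrict_mem measurableSet_Ioi] with t ht
    rw [Real.norm_eq_abs, abs_of_nonneg
      (mul_nonneg (NNReal.coe_nonneg _) (Real.rpow_nonneg (abs_nonneg t) p))]
    exact hbound t ht
  have hsplit : ∫ t, h t = ∫ t in Set.Ioi 0, h t := by
    calc ∫ t, h t = ∫ t, (Set.Ici (0:ℝ)).indicator h t := by
          apply integral_congr_ae
          apply Filter.Eventually.of_forall
          intro t
          by_cases h0 : (0:ℝ) ≤ t
          · rw [Set.indicator_of_mem (show t ∈ Set.Ici (0:ℝ) from h0) h]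
          · rw [Set.indicator_of_notMem (show t ∉ Set.Ici (0:ℝ) from h0) h, hh]
            have : mrDensity α β t = 0 := by
              unfold mrDensity; rw [if_neg (not_le.mpr (not_le.mp h0))]
            simp [this]
      _ = ∫ t in Set.Ici 0, h t := integral_indicator measurableSet_Ici
      _ = ∫ t in Set.Ioi 0, h t := integral_Ici_eq_integral_Ioi
  have hIoi : ∫ t in Set.Ioi (0:ℝ), h t ≤ ∫ t in Set.Ioi (0:ℝ), M * Real.exp (-(b * t)) :=
    setIntegral_mono_on hinth hbint measurableSet_Ioi hbound
  have hval : ∫ t in Set.Ioi (0:ℝ), Real.exp (-(b * t)) = b⁻¹ := by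
    have h5 := integral_comp_mul_right_Ioi (fun x => Real.exp (-x)) 0 hbpos
    simp only [zero_mul, integral_exp_neg_Ioi, neg_zero, Real.exp_zero, smul_eq_mul,
      mul_one] at h5
    have : ∀ t : ℝ, Real.exp (-(t * b)) = Real.exp (-(b * t)) := fun t => by rw [mul_comm]
    simp_rw [this] at h5
    exact h5
  have hval2 : ∫ t in Set.Ioi (0:ℝ), M * Real.exp (-(b * t)) = M * b⁻¹ := by
    rw [integral_const_mul, hval]
  have hbinv : b⁻¹ = 4 * β := by rw [hbdef]; field_simp
  have hfinal : ∫ ω, |X ω| ^ p ∂P ≤ 4 * Real.exp (α / β) * (4 * β * p) ^ p := by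
    rw [h1, hsplit]
    calc ∫ t in Set.Ioi (0:ℝ), h t ≤ M * b⁻¹ := hIoi.trans (le_of_eq hval2)
      _ = 4 * Real.exp (α / β) * (4 * β * p) ^ p := by
          rw [hbinv, hM]; field_simp
  have hKp : 4 * Real.exp (α / β) * (4 * β * p) ^ p
      ≤ (16 * β * Real.exp (α / β) * p) ^ p := by
    have hA : (1:ℝ) ≤ 4 * Real.exp (α / β) := by
      nlinarith [Real.one_le_exp (by positivity : (0:ℝ) ≤ α / β)]
    have h6 : 4 * Real.exp (α / β) ≤ (4 * Real.exp (α / β)) ^ p := by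
      calc 4 * Real.exp (α / β) = (4 * Real.exp (α / β)) ^ (1:ℝ) := (Real.rpow_one _).symm
        _ ≤ (4 * Real.exp (α / β)) ^ p := Real.rpow_le_rpow_of_exponent_le hA hp
    calc 4 * Real.exp (α / β) * (4 * β * p) ^ p
        ≤ (4 * Real.exp (α / β)) ^ p * (4 * β * p) ^ p :=
          mul_le_mul_of_nonneg_right h6 (by positivity)
      _ = (4 * Real.exp (α / β) * (4 * β * p)) ^ p :=
          (Real.mul_rpow (by positivity) (by positivity)).symm
      _ = (16 * β * Real.exp (α / β) * p) ^ p := by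
          congr 1
          ring
  have hnn : 0 ≤ ∫ ω, |X ω| ^ p ∂P :=
    integral_nonneg fun ω => Real.rpow_nonneg (abs_nonneg _) p
  have hKpos : (0:ℝ) ≤ 16 * β * Real.exp (α / β) * p := by positivity
  calc (∫ ω, |X ω| ^ p ∂P) ^ (1 / p)
      ≤ ((16 * β * Real.exp (α / β) * p) ^ p) ^ (1 / p) :=
        Real.rpow_le_rpow hnn (hfinal.trans hKp) (by positivity)
    _ = 16 * β * Real.exp (α / β) * p := by
        rw [← Real.rpow_mul hKpos, mul_one_div, div_self hp0.ne', Real.rpow_one]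
end

section
/- For every α ≥ 0 and β > 0, the second raw moment of the Modified Rician distribution MR(α,β) equals α² + 4αβ + 2β²; that is, ∫_0^∞ t² · (1/β) · exp(−(t+α)/β) · I₀(2√(tα)/β) dt = α² + 4αβ + 2β². Consequently, the variance of MR(α,β) equals β² + 2αβ. -/
open MeasureTheory Real

open Set

lemma mr_hasSum_exp (x : ℝ) :
    HasSum (fun k : ℕ => x ^ k / (Nat.factorial k : ℝ)) (Real.exp x) := by
  rw [Real.exp_eq_exp_ℝ]
  exact NormedSpace.expSeries_div_hasSum_exp x

lemma mr_hasSum_poly (x : ℝ) :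
    HasSum (fun k : ℕ => ((k : ℝ) + 1) * ((k : ℝ) + 2) * x ^ k / (Nat.factorial k : ℝ))
      ((x ^ 2 + 4 * x + 2) * Real.exp x) := by
  have h0 := mr_hasSum_exp x
  -- t1 k = k * x^k / k!
  have h1 : HasSum (fun k : ℕ => (k : ℝ) * x ^ k / (Nat.factorial k : ℝ)) (x * Real.exp x) := by
    have h := (mr_hasSum_exp x).mul_left x
    have heq : (fun k : ℕ => x * (x ^ k / (Nat.factorial k : ℝ)))
        = fun k : ℕ => ((k : ℝ) + 1) * x ^ (k + 1) / (Nat.factorial (k + 1) : ℝ) := by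
      funext k
      rw [Nat.factorial_succ]
      push_cast
      have hk : (Nat.factorial k : ℝ) ≠ 0 := Nat.cast_ne_zero.mpr (Nat.factorial_ne_zero k)
      field_simp
      ring
    rw [heq] at h
    have h' := (hasSum_nat_add_iff (f := fun k : ℕ => (k : ℝ) * x ^ k / (Nat.factorial k : ℝ))
      1).mp (by simpa using h)
    simpa using h'
  -- t2 k = k * (k-1) * x^k / k!
  have h2 : HasSum (fun k : ℕ => (k : ℝ) * ((k : ℝ) - 1) * x ^ k / (Nat.factorial k : ℝ))
      (x ^ 2 * Real.exp x) := by
    have h := (mr_hasSum_exp x).mul_left (x ^ 2)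
    have heq : (fun k : ℕ => x ^ 2 * (x ^ k / (Nat.factorial k : ℝ)))
        = fun k : ℕ => ((k : ℝ) + 2) * (((k : ℝ) + 2) - 1) * x ^ (k + 2)
            / (Nat.factorial (k + 2) : ℝ) := by
      funext k
      have : Nat.factorial (k + 2) = (k + 2) * ((k + 1) * Nat.factorial k) := by
        rw [Nat.factorial_succ, Nat.factorial_succ]
      rw [this]
      push_cast
      have hk : (Nat.factorial k : ℝ) ≠ 0 := Nat.cast_ne_zero.mpr (Nat.factorial_ne_zero k)
      field_simp
      ring
    rw [heq] at h
    have h' := (hasSum_nat_add_iff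
      (f := fun k : ℕ => (k : ℝ) * ((k : ℝ) - 1) * x ^ k / (Nat.factorial k : ℝ)) 2).mp
      (by simpa using h)
    simpa [Finset.sum_range_succ] using h'
  have hsum := (h2.add (h1.mul_left 4)).add (h0.mul_left 2)
  have heq : (fun k : ℕ => ((k : ℝ) * ((k : ℝ) - 1) * x ^ k / (Nat.factorial k : ℝ)
        + 4 * ((k : ℝ) * x ^ k / (Nat.factorial k : ℝ)))
        + 2 * (x ^ k / (Nat.factorial k : ℝ)))
      = fun k : ℕ => ((k : ℝ) + 1) * ((k : ℝ) + 2) * x ^ k / (Nat.factorial k : ℝ) := by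
    funext k
    have hk : (Nat.factorial k : ℝ) ≠ 0 := Nat.cast_ne_zero.mpr (Nat.factorial_ne_zero k)
    field_simp
    ring
  rw [heq] at hsum
  convert hsum using 1
  ring

lemma mr_integrable (n : ℕ) {b : ℝ} (hb : 0 < b) :
    IntegrableOn (fun t : ℝ => t ^ n * Real.exp (-(b * t))) (Ioi 0) := by
  have h := integrableOn_rpow_mul_exp_neg_mul_rpow (p := 1) (s := (n : ℝ))
    (by exact_mod_cast neg_one_lt_zero.trans_le (Nat.cast_nonneg n) : (-1 : ℝ) < (n : ℝ)) one_pos hb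
  refine h.congr_fun (fun t ht => ?_) measurableSet_Ioi
  beta_reduce
  rw [Real.rpow_one, Real.rpow_natCast, neg_mul]

lemma mr_integral (n : ℕ) {b : ℝ} (hb : 0 < b) :
    ∫ t in Ioi (0 : ℝ), t ^ n * Real.exp (-(b * t))
      = (Nat.factorial n : ℝ) / b ^ (n + 1) := by
  have h := integral_rpow_mul_exp_neg_mul_Ioi (a := (n : ℝ) + 1) (by positivity) hb
  have hcongr : ∫ t in Ioi (0 : ℝ), t ^ n * Real.exp (-(b * t))
      = ∫ t in Ioi (0 : ℝ), t ^ (((n : ℝ) + 1) - 1) * Real.exp (-(b * t)) := by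
    refine setIntegral_congr_fun measurableSet_Ioi (fun t ht => ?_)
    rw [add_sub_cancel_right, Real.rpow_natCast]
  rw [hcongr, h, Real.Gamma_nat_eq_factorial]
  have : ((n : ℝ) + 1) = ((n + 1 : ℕ) : ℝ) := by push_cast; ring
  rw [this, Real.rpow_natCast, div_pow, one_pow]
  field_simp

/-- The second raw moment of the Modified Rician distribution `MR(α,β)` equals
`α² + 4αβ + 2β²`; consequently its variance (second raw moment minus the square of
the mean `α + β`) equals `β² + 2αβ`. -/
theorem mrDensity_second_moment_and_variance (α β : ℝ) (hα : 0 ≤ α) (hβ : 0 < β) :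
    (∫ t in Set.Ioi (0 : ℝ),
      t ^ 2 * ((1 / β) * Real.exp (-((t + α) / β)) * besselI0 (2 * Real.sqrt (t * α) / β)))
      = α ^ 2 + 4 * α * β + 2 * β ^ 2
    ∧ (∫ t in Set.Ioi (0 : ℝ),
      t ^ 2 * ((1 / β) * Real.exp (-((t + α) / β)) * besselI0 (2 * Real.sqrt (t * α) / β)))
      - (α + β) ^ 2 = β ^ 2 + 2 * α * β := by
  have hβ' : β ≠ 0 := hβ.ne'
  set C : ℕ → ℝ := fun k =>
    Real.exp (-(α / β)) / β * (α ^ k / (β ^ (2 * k) * ((Nat.factorial k : ℝ)) ^ 2)) with hC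
  set F : ℕ → ℝ → ℝ := fun k t => C k * (t ^ (k + 2) * Real.exp (-((1 / β) * t))) with hF
  -- pointwise identity on Ioi 0
  have hpt : ∀ t ∈ Ioi (0 : ℝ),
      t ^ 2 * ((1 / β) * Real.exp (-((t + α) / β)) * besselI0 (2 * Real.sqrt (t * α) / β))
        = ∑' k : ℕ, F k t := by
    intro t ht
    have ht0 : 0 ≤ t := le_of_lt ht
    have htα : 0 ≤ t * α := mul_nonneg ht0 hα
    have hb : besselI0 (2 * Real.sqrt (t * α) / β)
        = ∑' k : ℕ, (t * α) ^ k / (β ^ (2 * k) * ((Nat.factorial k : ℝ)) ^ 2) := by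
      unfold besselI0
      refine tsum_congr (fun k => ?_)
      have h1 : (2 * Real.sqrt (t * α) / β / 2) = Real.sqrt (t * α) / β := by ring
      rw [h1, div_pow, pow_mul, Real.sq_sqrt htα, div_div]
    rw [hb, ← tsum_mul_left, ← tsum_mul_left]
    refine tsum_congr (fun k => ?_)
    have hexp : Real.exp (-((t + α) / β))
        = Real.exp (-((1 / β) * t)) * Real.exp (-(α / β)) := by
      rw [← Real.exp_add]
      congr 1
      field_simp
      ring
    simp only [hF, hC]
    rw [hexp]
    have hk : ((Nat.factorial k : ℝ)) ^ 2 ≠ 0 := by positivity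
    field_simp
    ring
  have hint : (∫ t in Ioi (0 : ℝ),
      t ^ 2 * ((1 / β) * Real.exp (-((t + α) / β)) * besselI0 (2 * Real.sqrt (t * α) / β)))
      = ∫ t in Ioi (0 : ℝ), ∑' k : ℕ, F k t :=
    setIntegral_congr_fun measurableSet_Ioi hpt
  have hβinv : 0 < 1 / β := by positivity
  have hCnonneg : ∀ k, 0 ≤ C k := by
    intro k
    simp only [hC]
    positivity
  have hFint : ∀ k : ℕ, Integrable (F k) (volume.restrict (Ioi (0 : ℝ))) := by
    intro k
    exact ((mr_integrable (k + 2) hβinv).congr_fun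
      (fun t _ => rfl) measurableSet_Ioi).const_mul (C k)
  have hFval : ∀ k : ℕ, (∫ t in Ioi (0 : ℝ), F k t)
      = Real.exp (-(α / β)) * β ^ 2
        * (((k : ℝ) + 1) * ((k : ℝ) + 2) * (α / β) ^ k / (Nat.factorial k : ℝ)) := by
    intro k
    have : (∫ t in Ioi (0 : ℝ), F k t)
        = C k * ∫ t in Ioi (0 : ℝ), t ^ (k + 2) * Real.exp (-((1 / β) * t)) := by
      simp only [hF]
      rw [integral_const_mul]
    rw [this, mr_integral (k + 2) hβinv]
    have hfact : (Nat.factorial (k + 2) : ℝ)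
        = ((k : ℝ) + 2) * (((k : ℝ) + 1) * (Nat.factorial k : ℝ)) := by
      rw [Nat.factorial_succ, Nat.factorial_succ]
      push_cast
      ring
    simp only [hC]
    rw [hfact]
    have hk : (Nat.factorial k : ℝ) ≠ 0 := Nat.cast_ne_zero.mpr (Nat.factorial_ne_zero k)
    rw [div_pow, one_pow, pow_mul]
    field_simp
    rw [div_pow]
    field_simp
    ring
  -- the sum of the integrals
  have hsum : HasSum (fun k : ℕ => ∫ t in Ioi (0 : ℝ), F k t)
      (α ^ 2 + 4 * α * β + 2 * β ^ 2) := by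
    have h := (mr_hasSum_poly (α / β)).mul_left (Real.exp (-(α / β)) * β ^ 2)
    have hval : Real.exp (-(α / β)) * β ^ 2
        * (((α / β) ^ 2 + 4 * (α / β) + 2) * Real.exp (α / β))
        = α ^ 2 + 4 * α * β + 2 * β ^ 2 := by
      rw [show Real.exp (-(α / β)) * β ^ 2 * (((α / β) ^ 2 + 4 * (α / β) + 2) * Real.exp (α / β))
          = (Real.exp (-(α / β)) * Real.exp (α / β)) * (β ^ 2 * ((α / β) ^ 2 + 4 * (α / β) + 2))
          by ring, ← Real.exp_add]
      simp only [neg_add_cancel, Real.exp_zero, one_mul]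
      field_simp
    rw [hval] at h
    refine HasSum.congr_fun h (fun k => ?_)
    rw [hFval k]
  -- swap sum and integral
  have hswap : (∑' k : ℕ, ∫ t in Ioi (0 : ℝ), F k t) = ∫ t in Ioi (0 : ℝ), ∑' k : ℕ, F k t := by
    refine integral_tsum_of_summable_integral_norm hFint ?_
    have hnorm : ∀ k : ℕ, (∫ t in Ioi (0 : ℝ), ‖F k t‖) = ∫ t in Ioi (0 : ℝ), F k t := by
      intro k
      refine setIntegral_congr_fun measurableSet_Ioi (fun t ht => ?_)
      refine Real.norm_of_nonneg ?_
      have ht0 : (0 : ℝ) ≤ t := le_of_lt ht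
      have := hCnonneg k
      simp only [hF]
      positivity
    simp_rw [hnorm]
    exact hsum.summable
  have hmain : (∫ t in Set.Ioi (0 : ℝ),
      t ^ 2 * ((1 / β) * Real.exp (-((t + α) / β)) * besselI0 (2 * Real.sqrt (t * α) / β)))
      = α ^ 2 + 4 * α * β + 2 * β ^ 2 := by
    rw [hint, ← hswap, hsum.tsum_eq]
  exact ⟨hmain, by rw [hmain]; ring⟩
end

section
/- (Even moments of the Rice distribution.) Let ν ≥ 0 and σ > 0, and let n ≥ 0 be a natural number. Then ∫_0^∞ s^{2n} · (s/σ²) · exp(−(s²+ν²)/(2σ²)) · I₀(sν/σ²) ds = σ^{2n} · 2^n · n! · L_n(−ν²/(2σ²)), where L_n is the n-th Laguerre polynomial. -/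
open MeasureTheory Real Finset

/-- The `n`-th Laguerre polynomial, `L_n(x) = ∑_{k=0}^n (n choose k) (−x)^k / k!`. -/
noncomputable def laguerre (n : ℕ) (x : ℝ) : ℝ :=
  ∑ k ∈ Finset.range (n + 1), (n.choose k : ℝ) * (-x) ^ k / (Nat.factorial k : ℝ)

lemma gauss_moment {b : ℝ} (hb : 0 < b) (m : ℕ) :
    ∫ s in Set.Ioi (0:ℝ), s ^ (2*m+1) * Real.exp (-b * s^2)
      = (m.factorial : ℝ) / (2 * b^(m+1)) := by
  have h := integral_rpow_mul_exp_neg_mul_rpow (p := 2) (q := (2*m+1 : ℕ)) two_pos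
    (by have h0 : (0:ℝ) ≤ m := Nat.cast_nonneg m; push_cast; linarith) hb
  rw [show ((((2*m+1 : ℕ) : ℝ) + 1) / 2) = ((m:ℝ) + 1) by push_cast; ring,
    Real.Gamma_nat_eq_factorial] at h
  have hL : ∫ x in Set.Ioi (0:ℝ), x ^ (((2*m+1 : ℕ)) : ℝ) * Real.exp (-b * x ^ (2:ℝ))
      = ∫ s in Set.Ioi (0:ℝ), s ^ (2*m+1) * Real.exp (-b * s^2) := by
    refine setIntegral_congr_fun measurableSet_Ioi (fun x hx => ?_)
    rw [Real.rpow_natCast, show (2:ℝ) = ((2:ℕ):ℝ) by norm_num, Real.rpow_natCast]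
  rw [hL] at h
  rw [h, show (-(((2*m+1 : ℕ):ℝ) + 1) / 2) = -((m+1 : ℕ) : ℝ) by push_cast; ring,
    Real.rpow_neg hb.le, Real.rpow_natCast]
  field_simp


lemma gauss_integrable {b : ℝ} (hb : 0 < b) (m : ℕ) :
    IntegrableOn (fun s : ℝ => s ^ (2*m+1) * Real.exp (-b * s^2)) (Set.Ioi 0) := by
  have h := integrableOn_rpow_mul_exp_neg_mul_sq hb
    (s := ((2*m+1 : ℕ) : ℝ)) (by have h0 : (0:ℝ) ≤ m := Nat.cast_nonneg m; push_cast; linarith)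
  refine h.congr_fun (fun x hx => ?_) measurableSet_Ioi
  beta_reduce; rw [Real.rpow_natCast]

lemma comb_sum (n k : ℕ) :
    ∑ j ∈ range (k+1), (n.factorial : ℝ) * (n.choose j) / (j.factorial) / ((k-j).factorial)
      = ((n+k).factorial : ℝ) / ((k.factorial : ℝ))^2 := by
  have vdm : (∑ j ∈ range (k+1), n.choose j * k.choose j) = (n+k).choose k := by
    rw [Nat.add_choose_eq, Finset.Nat.sum_antidiagonal_eq_sum_range_succ_mk]
    refine sum_congr rfl fun j hj => ?_
    rw [Nat.choose_symm (Nat.lt_succ_iff.mp (mem_range.mp hj))]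
  have step : ∀ j ∈ range (k+1),
      (n.factorial : ℝ) * (n.choose j) / (j.factorial) / ((k-j).factorial)
        = (n.factorial : ℝ) / (k.factorial) * ((n.choose j : ℝ) * (k.choose j : ℝ)) := by
    intro j hj
    have hjk : j ≤ k := Nat.lt_succ_iff.mp (mem_range.mp hj)
    have hfac : (k.choose j : ℝ) * (j.factorial : ℝ) * ((k-j).factorial : ℝ)
        = (k.factorial : ℝ) := by
      exact_mod_cast congrArg (Nat.cast (R := ℝ)) (Nat.choose_mul_factorial_mul_factorial hjk)
    have h1 : (j.factorial : ℝ) ≠ 0 := Nat.cast_ne_zero.mpr j.factorial_ne_zero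
    have h2 : ((k-j).factorial : ℝ) ≠ 0 := Nat.cast_ne_zero.mpr (k-j).factorial_ne_zero
    have h3 : (k.factorial : ℝ) ≠ 0 := Nat.cast_ne_zero.mpr k.factorial_ne_zero
    field_simp
    linear_combination (-((n.choose j : ℕ) : ℝ)) * hfac
  rw [sum_congr rfl step, ← mul_sum]
  have : (∑ j ∈ range (k+1), (n.choose j : ℝ) * (k.choose j : ℝ)) = ((n+k).choose k : ℝ) := by
    exact_mod_cast congrArg (Nat.cast (R := ℝ)) vdm
  rw [this]
  have hfac2 : ((n+k).choose k : ℝ) * (k.factorial : ℝ) * (n.factorial : ℝ)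
      = ((n+k).factorial : ℝ) := by
    have := Nat.choose_mul_factorial_mul_factorial (Nat.le_add_left k n)
    rw [Nat.add_sub_cancel] at this
    exact_mod_cast congrArg (Nat.cast (R := ℝ)) this
  have h3 : (k.factorial : ℝ) ≠ 0 := Nat.cast_ne_zero.mpr k.factorial_ne_zero
  have h4 : (n.factorial : ℝ) ≠ 0 := Nat.cast_ne_zero.mpr n.factorial_ne_zero
  field_simp
  linear_combination hfac2


lemma series_hasSum (n : ℕ) (t : ℝ) :
    HasSum (fun k => ((n+k).factorial : ℝ) / ((k.factorial : ℝ))^2 * t^k)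
      (Real.exp t * ∑ j ∈ range (n+1),
        (n.factorial : ℝ) * (n.choose j) / (j.factorial) * t^j) := by
  set f : ℕ → ℝ := fun j => (n.factorial : ℝ) * (n.choose j) / (j.factorial) * t^j with hf_def
  set g : ℕ → ℝ := fun m => t^m / (m.factorial : ℝ) with hg_def
  have hfz : ∀ j ∉ range (n+1), f j = 0 := by
    intro j hj
    simp only [hf_def, Nat.choose_eq_zero_of_lt (by simpa using hj : n < j)]
    simp
  have hf : Summable fun j => ‖f j‖ :=
    summable_of_ne_finset_zero (s := range (n+1)) (fun j hj => by rw [hfz j hj, norm_zero])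
  have hg : Summable fun m => ‖g m‖ := by
    refine (Real.summable_pow_div_factorial |t|).congr fun m => ?_
    simp [hg_def, abs_div, abs_pow]
  have H := hasSum_sum_range_mul_of_summable_norm hf hg
  have htf : (∑' j, f j) = ∑ j ∈ range (n+1), f j := tsum_eq_sum hfz
  have htg : (∑' m, g m) = Real.exp t := by
    rw [Real.exp_eq_exp_ℝ, NormedSpace.exp_eq_tsum_div]
  rw [htf, htg] at H
  have key : ∀ k, (∑ j ∈ range (k+1), f j * g (k-j))
      = ((n+k).factorial : ℝ) / ((k.factorial : ℝ))^2 * t^k := by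
    intro k
    rw [← comb_sum n k, Finset.sum_mul]
    refine sum_congr rfl fun j hj => ?_
    have hjk : j ≤ k := Nat.lt_succ_iff.mp (mem_range.mp hj)
    simp only [hf_def, hg_def]
    have hpow : t^j * t^(k-j) = t^k := by rw [← pow_add, Nat.add_sub_cancel' hjk]
    linear_combination ((n.factorial:ℝ)*(n.choose j)/(j.factorial)/((k-j).factorial)) * hpow
  rw [mul_comm]
  exact HasSum.congr_fun H (fun k => (key k).symm)


/-- Even moments of the Rice distribution:
`∫_0^∞ s^{2n} p_Rice(s) ds = σ^{2n} 2^n n! L_n(−ν²/(2σ²))`. -/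
theorem rice_even_moment (ν σ : ℝ) (hν : 0 ≤ ν) (hσ : 0 < σ) (n : ℕ) :
    ∫ s in Set.Ioi (0 : ℝ),
        s ^ (2 * n) * ((s / σ ^ 2) * Real.exp (-((s ^ 2 + ν ^ 2) / (2 * σ ^ 2)))
          * besselI0 (s * ν / σ ^ 2))
      = σ ^ (2 * n) * 2 ^ n * (Nat.factorial n : ℝ) * laguerre n (-(ν ^ 2 / (2 * σ ^ 2))) := by
  have hσ2 : (0:ℝ) < σ^2 := by positivity
  have h2σ : (0:ℝ) < 2*σ^2 := by linarith
  set b : ℝ := (2*σ^2)⁻¹ with hb_def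
  have hb : 0 < b := by positivity
  set t : ℝ := ν^2/(2*σ^2) with ht_def
  have ht : 0 ≤ t := by positivity
  set a : ℕ → ℝ := fun k =>
    Real.exp (-t) / σ^2 * (((ν/(2*σ^2))^2)^k / ((k.factorial : ℝ))^2) with ha_def
  have ha : ∀ k, 0 ≤ a k := fun k => by positivity
  set g : ℕ → ℝ → ℝ := fun k s => a k * (s ^ (2*(n+k)+1) * Real.exp (-b * s^2)) with hg_def
  -- pointwise identity
  have hpt : ∀ s : ℝ, (∑' k, g k s)
      = s ^ (2 * n) * ((s / σ ^ 2) * Real.exp (-((s ^ 2 + ν ^ 2) / (2 * σ ^ 2)))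
          * besselI0 (s * ν / σ ^ 2)) := by
    intro s
    rw [show s ^ (2 * n) * ((s / σ ^ 2) * Real.exp (-((s ^ 2 + ν ^ 2) / (2 * σ ^ 2)))
          * besselI0 (s * ν / σ ^ 2))
        = (s ^ (2 * n) * ((s / σ ^ 2) * Real.exp (-((s ^ 2 + ν ^ 2) / (2 * σ ^ 2)))))
          * besselI0 (s * ν / σ ^ 2) by ring]
    rw [besselI0, ← tsum_mul_left]
    refine tsum_congr fun k => ?_
    have hexp : Real.exp (-((s^2+ν^2)/(2*σ^2))) = Real.exp (-b*s^2) * Real.exp (-t) := by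
      rw [← Real.exp_add]
      congr 1
      rw [hb_def, ht_def]
      field_simp
      ring
    rw [hexp, hg_def, ha_def]
    simp only
    have hA : (s * ν / σ ^ 2 / 2) ^ (2*k) = (s^2)^k * ((ν/(2*σ^2))^2)^k := by
      rw [pow_mul, show (s*ν/σ^2/2)^2 = s^2 * (ν/(2*σ^2))^2 by
        field_simp, mul_pow]
    have hB : s^(2*(n+k)+1) = s^(2*n) * s * (s^2)^k := by
      rw [show 2*(n+k)+1 = 2*n+1+2*k by ring, pow_add, pow_add, pow_one, pow_mul, pow_mul]
    rw [hA, hB]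
    ring
  -- integrability
  have hint : ∀ k, IntegrableOn (g k) (Set.Ioi 0) := fun k =>
    ((gauss_integrable hb (n+k)).const_mul (a k))
  -- value of each integral
  have hval : ∀ k, ∫ s in Set.Ioi (0:ℝ), g k s
      = a k * (((n+k).factorial : ℝ) / (2 * b^(n+k+1))) := by
    intro k
    rw [hg_def]
    simp only
    rw [MeasureTheory.integral_const_mul, gauss_moment hb (n+k)]
  -- norm integrals equal plain integrals
  have hnormval : ∀ k, ∫ s in Set.Ioi (0:ℝ), ‖g k s‖
      = a k * (((n+k).factorial : ℝ) / (2 * b^(n+k+1))) := by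
    intro k
    rw [← hval k]
    refine setIntegral_congr_fun measurableSet_Ioi (fun s hs => ?_)
    have hs' : (0:ℝ) < s := hs
    rw [Real.norm_of_nonneg (by positivity)]
  -- the coefficient identity
  have hck : ∀ k, a k * (((n+k).factorial : ℝ) / (2 * b^(n+k+1)))
      = (((n+k).factorial : ℝ) / ((k.factorial : ℝ))^2 * t^k)
        * (Real.exp (-t) * (2*σ^2)^n) := by
    intro k
    have hbase : (ν/(2*σ^2))^2 * (2*σ^2) = t := by
      rw [ht_def]; field_simp
    have htk : ((ν/(2*σ^2))^2)^k * (2*σ^2)^k = t^k := by rw [← mul_pow, hbase]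
    rw [ha_def, ← htk, hb_def]
    simp only
    have hk : ((k.factorial : ℝ)) ≠ 0 := Nat.cast_ne_zero.mpr k.factorial_ne_zero
    rw [inv_pow]
    field_simp
    ring
  have hsummable : Summable fun k => a k * (((n+k).factorial : ℝ) / (2 * b^(n+k+1))) := by
    refine Summable.congr (((series_hasSum n t).summable).mul_right
      (Real.exp (-t) * (2*σ^2)^n)) fun k => (hck k).symm
  -- swap integral and sum
  have hswap := MeasureTheory.integral_tsum_of_summable_integral_norm
    (μ := volume.restrict (Set.Ioi 0)) (F := g) hint
    (by rw [show (fun k => ∫ s, ‖g k s‖ ∂(volume.restrict (Set.Ioi 0)))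
          = fun k => a k * (((n+k).factorial : ℝ) / (2 * b^(n+k+1))) from funext hnormval]
        exact hsummable)
  have key : ∫ s in Set.Ioi (0:ℝ),
        s ^ (2 * n) * ((s / σ ^ 2) * Real.exp (-((s ^ 2 + ν ^ 2) / (2 * σ ^ 2)))
          * besselI0 (s * ν / σ ^ 2))
      = ∑' k, a k * (((n+k).factorial : ℝ) / (2 * b^(n+k+1))) := by
    rw [← tsum_congr hval, hswap]
    exact setIntegral_congr_fun measurableSet_Ioi (fun s _ => (hpt s).symm)
  rw [key, tsum_congr hck, tsum_mul_right, (series_hasSum n t).tsum_eq]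
  have hee : Real.exp t * Real.exp (-t) = 1 := by rw [← Real.exp_add]; simp
  set S : ℝ := ∑ j ∈ range (n+1), (n.factorial : ℝ) * (n.choose j) / (j.factorial) * t^j
    with hS_def
  rw [show Real.exp t * S * (Real.exp (-t) * (2*σ^2)^n)
      = (Real.exp t * Real.exp (-t)) * (S * (2*σ^2)^n) by ring, hee, one_mul]
  rw [laguerre]
  simp only [neg_neg]
  rw [hS_def, Finset.sum_mul, Finset.mul_sum]
  refine Finset.sum_congr rfl fun j hj => ?_
  rw [show (2*σ^2)^n = 2^n * σ^(2*n) by rw [mul_pow, pow_mul]]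
  ring
end

section
/- For every natural number n and every real x ≥ 0, the n-th Laguerre polynomial satisfies |L_n(x)| ≤ exp(x/2). -/
open Real

open Polynomial

noncomputable section
namespace Lag

/-- real Hermite polynomial (probabilists') -/
def H (n : ℕ) : ℝ[X] := (hermite n).map (Int.castRingHom ℝ)

lemma H_zero : H 0 = 1 := by simp [H, hermite_zero]

lemma H_succ (n : ℕ) : H (n + 1) = X * H n - derivative (H n) := by
  simp [H, hermite_succ, Polynomial.derivative_map]

lemma derivative_H : ∀ n : ℕ, derivative (H n) = C (n : ℝ) * H (n - 1)
  | 0 => by simp [H_zero]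
  | 1 => by simp [H_succ, H_zero]
  | (n + 2) => by
    have ih1 := derivative_H (n + 1)
    have ih0 := derivative_H n
    have hs := H_succ n
    simp only [Nat.add_sub_cancel] at ih1 ⊢
    rw [H_succ (n + 1), derivative_sub, derivative_mul, derivative_X, one_mul, ih1,
      derivative_mul, derivative_C, zero_mul, zero_add, ih0]
    push_cast
    simp only [map_add, map_one, map_ofNat]
    linear_combination (C (n:ℝ) + 1) * ih0 - (C (n:ℝ) + 1) * hs

end Lag

namespace Lag
open Finset

lemma iterate_derivative_H (j : ℕ) : ∀ k : ℕ,
    derivative^[k] (H j) = C ((j.descFactorial k : ℕ) : ℝ) * H (j - k)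
  | 0 => by simp
  | (k + 1) => by
    rw [Function.iterate_succ_apply', iterate_derivative_H j k, derivative_C_mul, derivative_H,
      Nat.descFactorial_succ]
    rw [show j - k - 1 = j - (k+1) by omega]
    rw [Nat.cast_mul, mul_comm (((j-k : ℕ)):ℝ) _, C_mul]
    ring

lemma H_comp (n : ℕ) (a : ℝ) :
    (H n).comp (X + C a) = ∑ k ∈ Finset.range (n+1), C ((n.choose k : ℝ) * a^(n-k)) * H k := by
  induction n with
  | zero => simp [H_zero]
  | succ n ih =>
    have h1 : (H (n+1)).comp (X + C a)
        = (X + C a) * ((H n).comp (X + C a)) - derivative ((H n).comp (X + C a)) := by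
      rw [H_succ, sub_comp, mul_comp, X_comp, derivative_comp]
      simp
    rw [h1, ih, derivative_sum]
    have h2 : ∀ k ∈ range (n+1), derivative (C ((n.choose k : ℝ) * a^(n-k)) * H k)
        = C ((n.choose k : ℝ) * a^(n-k)) * (C (k:ℝ) * H (k-1)) := by
      intro k _; rw [derivative_C_mul, derivative_H]
    rw [Finset.sum_congr rfl h2, add_mul, Finset.mul_sum, Finset.mul_sum,
      add_sub_right_comm, ← Finset.sum_sub_distrib]
    have h3 : ∀ k ∈ range (n+1),
        X * (C ((n.choose k : ℝ) * a^(n-k)) * H k)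
          - C ((n.choose k : ℝ) * a^(n-k)) * (C (k:ℝ) * H (k-1))
        = C ((n.choose k : ℝ) * a^(n-k)) * H (k+1) := by
      intro k _
      linear_combination (C ((n.choose k : ℝ) * a^(n-k))) * (derivative_H k)
        - (C ((n.choose k : ℝ) * a^(n-k))) * (H_succ k)
    rw [Finset.sum_congr rfl h3]
    have h4 : ∀ k ∈ range (n+1),
        C a * (C ((n.choose k : ℝ) * a^(n-k)) * H k)
        = C (a * ((n.choose k : ℝ) * a^(n-k))) * H k := by
      intro k _; rw [← mul_assoc, ← C_mul]
    rw [Finset.sum_congr rfl h4]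
    -- RHS: split off k = 0 and use Pascal
    rw [Finset.sum_range_succ' (fun k => C (((n+1).choose k : ℝ) * a^(n+1-k)) * H k),
      Finset.sum_range_succ' (fun k => C (a * ((n.choose k : ℝ) * a^(n-k))) * H k)]
    have h5 : ∀ i ∈ range (n+1), C (((n+1).choose (i+1) : ℝ) * a^(n+1-(i+1))) * H (i+1)
        = C ((n.choose i : ℝ) * a^(n-i)) * H (i+1)
          + C ((n.choose (i+1) : ℝ) * a^(n-i)) * H (i+1) := by
      intro i _
      rw [Nat.choose_succ_succ, Nat.succ_sub_succ, Nat.cast_add, add_mul, map_add, add_mul]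
    rw [Finset.sum_congr rfl h5, Finset.sum_add_distrib]
    have h6 : ∀ i ∈ range n, C (a * ((n.choose (i+1) : ℝ) * a^(n-(i+1)))) * H (i+1)
        = C ((n.choose (i+1) : ℝ) * a^(n-i)) * H (i+1) := by
      intro i hi
      have hi' : i < n := Finset.mem_range.mp hi
      have : n - i = (n - (i+1)) + 1 := by omega
      rw [this, pow_succ]
      ring_nf
    rw [Finset.sum_congr rfl h6]
    rw [Finset.sum_range_succ (fun i => C ((n.choose (i+1) : ℝ) * a^(n-i)) * H (i+1))]
    simp [Nat.choose_succ_self]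
    ring

end Lag

namespace Lag
open Finset MeasureTheory Filter intervalIntegral

lemma integrable_mono_gauss (i : ℕ) : Integrable fun y : ℝ => y^i * Real.exp (-(y^2)/2) := by
  have h := integrable_rpow_mul_exp_neg_mul_sq (b := (1:ℝ)/2) (by norm_num)
    (s := (i:ℝ)) (lt_of_lt_of_le (by norm_num) (Nat.cast_nonneg i))
  have h2 : (fun x : ℝ => x ^ (i:ℝ) * Real.exp (-(1/2)*x^2))
      = fun y : ℝ => y^i * Real.exp (-(y^2)/2) := by
    funext x; rw [Real.rpow_natCast]; congr 1; ring
  rwa [h2] at h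

lemma integrable_poly_gauss (q : ℝ[X]) :
    Integrable fun y : ℝ => eval y q * Real.exp (-(y^2)/2) := by
  have : (fun y : ℝ => eval y q * Real.exp (-(y^2)/2))
      = fun y => ∑ i ∈ range (q.natDegree + 1), q.coeff i * (y^i * Real.exp (-(y^2)/2)) := by
    funext y; rw [Polynomial.eval_eq_sum_range, Finset.sum_mul]
    exact Finset.sum_congr rfl (fun i _ => by ring)
  rw [this]
  exact integrable_finset_sum _ (fun i _ => (integrable_mono_gauss i).const_mul _)

lemma tendsto_poly_gauss (q : ℝ[X]) :
    Tendsto (fun y : ℝ => eval y q * Real.exp (-(y^2)/2)) atTop (nhds 0) := by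
  have h1 := q.tendsto_div_exp_atTop
  have h2 : Tendsto (fun y : ℝ => Real.exp (y - (y^2)/2)) atTop (nhds 0) := by
    apply Real.tendsto_exp_atBot.comp
    have hev : (fun y : ℝ => y - (y^2)/2) ≤ᶠ[atTop] (fun y : ℝ => -y) := by
      filter_upwards [Filter.eventually_ge_atTop (4:ℝ)] with y hy
      show y - (y^2)/2 ≤ -y
      nlinarith
    exact tendsto_atBot_mono' atTop hev tendsto_neg_atTop_atBot
  have h3 : Tendsto (fun y : ℝ => (eval y q / Real.exp y) * Real.exp (y - (y^2)/2))
      atTop (nhds 0) := by simpa using h1.mul h2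
  refine h3.congr fun y => ?_
  rw [show y - (y^2)/2 = y + (-(y^2)/2) by ring, Real.exp_add]
  field_simp

lemma tendsto_poly_gauss_bot (q : ℝ[X]) :
    Tendsto (fun y : ℝ => eval y q * Real.exp (-(y^2)/2)) atBot (nhds 0) := by
  have h := (tendsto_poly_gauss (q.comp (-X))).comp tendsto_neg_atBot_atTop
  refine h.congr fun y => ?_
  simp only [Function.comp_apply, eval_comp, eval_neg, eval_X, neg_neg, neg_sq]

lemma key_hasDeriv (q : ℝ[X]) (y : ℝ) :
    HasDerivAt (fun y : ℝ => eval y q * Real.exp (-(y^2)/2))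
      (eval y (derivative q - X * q) * Real.exp (-(y^2)/2)) y := by
  have h1 : HasDerivAt (fun y : ℝ => eval y q) (eval y (derivative q)) y :=
    q.hasDerivAt y
  have h2 : HasDerivAt (fun y : ℝ => Real.exp (-(y^2)/2)) (-y * Real.exp (-(y^2)/2)) y := by
    have hd : HasDerivAt (fun y : ℝ => -(y^2)/2) (-y) y := by
      have := ((hasDerivAt_pow 2 y).neg.div_const 2)
      refine this.congr_deriv ?_
      simp; ring
    convert hd.exp using 1
    ring
  have h3 := h1.mul h2
  refine h3.congr_deriv ?_
  simp only [eval_sub, eval_mul, eval_X]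
  ring

lemma intZero (q : ℝ[X]) :
    ∫ y : ℝ, eval y (derivative q - X * q) * Real.exp (-(y^2)/2) = 0 := by
  set G := fun y : ℝ => eval y (derivative q - X * q) * Real.exp (-(y^2)/2) with hG
  have hGint : Integrable G := integrable_poly_gauss _
  have hlim : Tendsto (fun T : ℝ => ∫ y in (-T)..T, G y) atTop (nhds (∫ y, G y)) :=
    intervalIntegral_tendsto_integral hGint tendsto_neg_atTop_atBot tendsto_id
  have heval : (fun T : ℝ => ∫ y in (-T)..T, G y)
      = fun T => (eval T q * Real.exp (-(T^2)/2)) - (eval (-T) q * Real.exp (-((-T)^2)/2)) := by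
    funext T
    apply intervalIntegral.integral_eq_sub_of_hasDerivAt
    · intro y _; exact key_hasDeriv q y
    · exact hGint.intervalIntegrable
  have hlim2 : Tendsto (fun T : ℝ => ∫ y in (-T)..T, G y) atTop (nhds 0) := by
    rw [heval]
    have ha := tendsto_poly_gauss q
    have hb := (tendsto_poly_gauss_bot q).comp tendsto_neg_atTop_atBot
    simpa using ha.sub hb
  have := tendsto_nhds_unique hlim hlim2
  rw [← this]

end Lag

namespace Lag
open Finset MeasureTheory Filter

lemma ibp (p : ℝ[X]) (k : ℕ) :
    ∫ y : ℝ, eval y (p * H (k+1)) * Real.exp (-(y^2)/2)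
    = ∫ y : ℝ, eval y (derivative p * H k) * Real.exp (-(y^2)/2) := by
  have h0 := intZero (p * H k)
  have hpoly : derivative (p * H k) - X * (p * H k)
      = derivative p * H k - p * H (k+1) := by
    rw [derivative_mul, H_succ k]; ring
  rw [hpoly] at h0
  simp only [eval_sub, sub_mul] at h0
  rw [integral_sub (integrable_poly_gauss _) (integrable_poly_gauss _)] at h0
  linarith

lemma reduce (k : ℕ) : ∀ p : ℝ[X],
    ∫ y : ℝ, eval y (p * H k) * Real.exp (-(y^2)/2)
    = ∫ y : ℝ, eval y (derivative^[k] p) * Real.exp (-(y^2)/2) := by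
  induction k with
  | zero => intro p; simp [H_zero]
  | succ k ih =>
    intro p
    rw [ibp p k, ih (derivative p), ← Function.iterate_succ_apply]

lemma gauss_int : ∫ y : ℝ, Real.exp (-(y^2)/2) = Real.sqrt (2*Real.pi) := by
  have h := integral_gaussian (1/2)
  rw [show Real.pi / (1/2) = 2 * Real.pi by ring] at h
  rw [← h]
  congr 1; funext x; congr 1; ring

lemma int_H (m : ℕ) : ∫ y : ℝ, eval y (H m) * Real.exp (-(y^2)/2)
    = if m = 0 then Real.sqrt (2*Real.pi) else 0 := by
  have h := reduce m 1
  rw [one_mul] at h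
  rw [h]
  cases m with
  | zero => simpa using gauss_int
  | succ m =>
    have h2 : derivative^[m+1] (1:ℝ[X]) = 0 := by
      rw [Function.iterate_succ_apply, derivative_one, Polynomial.iterate_derivative_zero]
    simp [h2]

lemma orth (j k : ℕ) : ∫ y : ℝ, eval y (H j * H k) * Real.exp (-(y^2)/2)
    = if j = k then Real.sqrt (2*Real.pi) * (Nat.factorial j : ℝ) else 0 := by
  rw [reduce k (H j), iterate_derivative_H j k]
  simp only [eval_mul, eval_C, mul_assoc]
  rw [MeasureTheory.integral_const_mul, int_H]
  rcases lt_trichotomy j k with h | h | h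
  · have hd : j.descFactorial k = 0 := Nat.descFactorial_eq_zero_iff_lt.mpr h
    simp [hd, if_neg (by omega : ¬ j = k)]
  · subst h
    simp [Nat.descFactorial_self, mul_comm]
  · have h1 : ¬ (j - k = 0) := by omega
    simp [h1, if_neg (by omega : ¬ j = k)]

end Lag

namespace Lag
open Finset MeasureTheory Filter

lemma He_expand (n : ℕ) (a y : ℝ) : eval (y + a) (H n)
    = ∑ k ∈ range (n+1), ((n.choose k : ℝ) * a^(n-k)) * eval y (H k) := by
  have h := congrArg (eval y) (H_comp n a)
  rw [eval_comp] at h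
  simpa [eval_add, eval_X, eval_C, eval_finset_sum, eval_mul] using h

lemma integrable_term (j k : ℕ) (c d : ℝ) :
    Integrable (fun y : ℝ =>
      (c * eval y (H j)) * (d * eval y (H k)) * Real.exp (-(y^2)/2)) := by
  have h := integrable_poly_gauss (C (c*d) * (H j * H k))
  refine h.congr (Filter.Eventually.of_forall fun y => ?_)
  simp only [eval_mul, eval_C]
  ring

lemma main_int (n : ℕ) (a : ℝ) :
    ∫ y : ℝ, eval (y+a) (H n) * eval (y-a) (H n) * Real.exp (-(y^2)/2)
    = Real.sqrt (2*Real.pi)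
      * ∑ k ∈ range (n+1),
          ((n.choose k : ℝ))^2 * (Nat.factorial k : ℝ) * (-(a^2))^(n-k) := by
  have h1 : (fun y : ℝ => eval (y+a) (H n) * eval (y-a) (H n) * Real.exp (-(y^2)/2))
      = fun y => ∑ k ∈ range (n+1), ∑ j ∈ range (n+1),
          (((n.choose k : ℝ) * a^(n-k)) * eval y (H k))
            * (((n.choose j : ℝ) * (-a)^(n-j)) * eval y (H j)) * Real.exp (-(y^2)/2) := by
    funext y
    rw [He_expand n a y, show y - a = y + (-a) by ring, He_expand n (-a) y,
      Finset.sum_mul_sum, Finset.sum_mul]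
    refine Finset.sum_congr rfl fun k _ => ?_
    rw [Finset.sum_mul]
  rw [h1, integral_finset_sum _ (fun k _ => integrable_finset_sum _
    (fun j _ => integrable_term k j _ _))]
  have h2 : ∀ k ∈ range (n+1),
      (∫ y : ℝ, ∑ j ∈ range (n+1),
        (((n.choose k : ℝ) * a^(n-k)) * eval y (H k))
          * (((n.choose j : ℝ) * (-a)^(n-j)) * eval y (H j)) * Real.exp (-(y^2)/2))
      = ((n.choose k : ℝ))^2 * (Nat.factorial k : ℝ) * (-(a^2))^(n-k)
          * Real.sqrt (2*Real.pi) := by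
    intro k hk
    rw [integral_finset_sum _ (fun j _ => integrable_term k j _ _)]
    have h3 : ∀ j ∈ range (n+1),
        (∫ y : ℝ, (((n.choose k : ℝ) * a^(n-k)) * eval y (H k))
          * (((n.choose j : ℝ) * (-a)^(n-j)) * eval y (H j)) * Real.exp (-(y^2)/2))
        = (((n.choose k : ℝ) * a^(n-k)) * ((n.choose j : ℝ) * (-a)^(n-j)))
            * (if k = j then Real.sqrt (2*Real.pi) * (Nat.factorial k : ℝ) else 0) := by
      intro j _
      rw [← orth k j, ← MeasureTheory.integral_const_mul]
      congr 1; funext y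
      simp only [eval_mul]
      ring
    rw [Finset.sum_congr rfl h3]
    simp only [mul_ite, mul_zero]
    rw [Finset.sum_ite_eq (range (n+1)) k, if_pos hk]
    have hpow : a^(n-k) * (-a)^(n-k) = (-(a^2))^(n-k) := by
      rw [← mul_pow]; congr 1; ring
    rw [show ((n.choose k : ℝ)) * a ^ (n - k) * (((n.choose k : ℝ)) * (-a) ^ (n - k))
          * (Real.sqrt (2 * Real.pi) * (Nat.factorial k : ℝ))
        = (a^(n-k) * (-a)^(n-k)) * (((n.choose k : ℝ))^2 * (Nat.factorial k : ℝ)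
          * Real.sqrt (2*Real.pi)) by ring, hpow]
    ring
  rw [Finset.sum_congr rfl h2, ← Finset.sum_mul]
  ring

end Lag

namespace Lag
open Finset MeasureTheory Filter

lemma sum_eq_laguerre (n : ℕ) (x : ℝ) :
    ∑ k ∈ range (n+1), ((n.choose k : ℝ))^2 * (Nat.factorial k : ℝ) * (-x)^(n-k)
    = (Nat.factorial n : ℝ) * laguerre n x := by
  rw [laguerre, Finset.mul_sum,
    ← Finset.sum_range_reflect (fun j => (Nat.factorial n : ℝ)
      * ((n.choose j : ℝ) * (-x)^j / (Nat.factorial j : ℝ))) (n+1)]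
  refine Finset.sum_congr rfl fun k hk => ?_
  have hk' : k ≤ n := by
    have := Finset.mem_range.mp hk; omega
  have hidx : n + 1 - 1 - k = n - k := by omega
  rw [hidx, Nat.choose_symm hk']
  have hfac : ((n.choose k : ℝ)) * (Nat.factorial k : ℝ) * (Nat.factorial (n-k) : ℝ)
      = (Nat.factorial n : ℝ) := by
    exact_mod_cast Nat.choose_mul_factorial_mul_factorial hk'
  have hne : (Nat.factorial (n-k) : ℝ) ≠ 0 := by positivity
  field_simp
  linear_combination ((n.choose k : ℝ) * (-x)^(n-k)) * hfac

lemma cs_bound (n : ℕ) (a : ℝ) :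
    |∫ y : ℝ, eval (y+a) (H n) * eval (y-a) (H n) * Real.exp (-(y^2)/2)|
      * Real.exp (-(a^2)/2)
    ≤ Real.sqrt (2*Real.pi) * (Nat.factorial n : ℝ) := by
  set S := Real.sqrt (2*Real.pi) * (Nat.factorial n : ℝ) with hS
  set F : ℝ → ℝ := fun y => eval (y+a) (H n) * Real.exp (-((y+a)^2)/4) with hF
  set G : ℝ → ℝ := fun y => eval (y-a) (H n) * Real.exp (-((y-a)^2)/4) with hG
  set ψ : ℝ → ℝ := fun t => eval t (H n * H n) * Real.exp (-(t^2)/2) with hψ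
  have hψint : Integrable ψ := integrable_poly_gauss _
  have hψval : ∫ t, ψ t = S := by
    rw [hψ]; simp only []
    rw [orth n n, if_pos rfl, hS]
  have hFF : ∀ y, F y * F y = ψ (y + a) := by
    intro y
    have he : Real.exp (-((y+a)^2)/4) * Real.exp (-((y+a)^2)/4)
        = Real.exp (-((y+a)^2)/2) := by
      rw [← Real.exp_add]; congr 1; ring
    simp only [hF, hψ, eval_mul]
    linear_combination (eval (y+a) (H n) * eval (y+a) (H n)) * he
  have hGG : ∀ y, G y * G y = ψ (y - a) := by
    intro y
    have he : Real.exp (-((y-a)^2)/4) * Real.exp (-((y-a)^2)/4)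
        = Real.exp (-((y-a)^2)/2) := by
      rw [← Real.exp_add]; congr 1; ring
    simp only [hG, hψ, eval_mul]
    linear_combination (eval (y-a) (H n) * eval (y-a) (H n)) * he
  have hF2int : Integrable (fun y => F y * F y) := by
    rw [funext hFF]; exact hψint.comp_add_right a
  have hG2int : Integrable (fun y => G y * G y) := by
    rw [funext hGG]; exact hψint.comp_sub_right a
  have hF2 : ∫ y, F y * F y = S := by
    rw [funext hFF, integral_add_right_eq_self ψ a]; exact hψval
  have hG2 : ∫ y, G y * G y = S := by
    rw [funext hGG]
    have : (fun y => ψ (y - a)) = fun y => ψ (y + (-a)) := by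
      funext y; rw [sub_eq_add_neg]
    rw [this, integral_add_right_eq_self ψ (-a)]; exact hψval
  have hFGeq : ∀ y, F y * G y
      = Real.exp (-(a^2)/2) * (eval (y+a) (H n) * eval (y-a) (H n) * Real.exp (-(y^2)/2)) := by
    intro y
    have he : Real.exp (-((y+a)^2)/4) * Real.exp (-((y-a)^2)/4)
        = Real.exp (-(a^2)/2) * Real.exp (-(y^2)/2) := by
      rw [← Real.exp_add, ← Real.exp_add]; congr 1; ring
    simp only [hF, hG]
    linear_combination (eval (y+a) (H n) * eval (y-a) (H n)) * he
  have hFGint : Integrable (fun y => F y * G y) := by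
    rw [funext hFGeq]
    refine Integrable.const_mul ?_ _
    have h := integrable_poly_gauss ((H n).comp (X + C a) * (H n).comp (X + C (-a)))
    refine h.congr (Filter.Eventually.of_forall fun y => ?_)
    simp only [eval_mul, eval_comp, eval_add, eval_X, eval_C]
    rw [show y + -a = y - a by ring]
  have key : ∀ s : ℝ, s = 1 ∨ s = -1 → s * ∫ y, F y * G y ≤ S := by
    intro s hs
    have h1 : 0 ≤ ∫ y, (F y - s * G y) * (F y - s * G y) :=
      integral_nonneg fun y => mul_self_nonneg _
    have hs2 : s * s = 1 := by rcases hs with h | h <;> rw [h] <;> norm_num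
    have hexp : (fun y => (F y - s * G y) * (F y - s * G y))
        = fun y => (F y * F y + G y * G y) - (2*s) * (F y * G y) := by
      funext y; have := hs2; nlinarith [hs2]
    have hadd : Integrable (fun y => F y * F y + G y * G y) := by
      exact hF2int.add hG2int
    rw [hexp, integral_sub hadd (hFGint.const_mul (2*s)),
      integral_add hF2int hG2int, hF2, hG2, integral_const_mul] at h1
    nlinarith [h1]
  have habs : |∫ y, F y * G y| ≤ S := by
    rcases abs_cases (∫ y, F y * G y) with ⟨h, _⟩ | ⟨h, _⟩
    · rw [h]; simpa using key 1 (Or.inl rfl)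
    · rw [h]; simpa using key (-1) (Or.inr rfl)
  have hFGval : ∫ y, F y * G y
      = Real.exp (-(a^2)/2) * ∫ y, eval (y+a) (H n) * eval (y-a) (H n) * Real.exp (-(y^2)/2) := by
    rw [funext hFGeq, integral_const_mul]
  rw [hFGval, abs_mul, Real.abs_exp] at habs
  calc |∫ y : ℝ, eval (y+a) (H n) * eval (y-a) (H n) * Real.exp (-(y^2)/2)| * Real.exp (-(a^2)/2)
      = Real.exp (-(a^2)/2) * |∫ y : ℝ, eval (y+a) (H n) * eval (y-a) (H n) * Real.exp (-(y^2)/2)| := by ring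
    _ ≤ S := habs

end Lag

/-- For every natural `n` and real `x ≥ 0`, `|L_n(x)| ≤ exp(x/2)`. -/
theorem abs_laguerre_le (n : ℕ) (x : ℝ) (hx : 0 ≤ x) :
    |laguerre n x| ≤ Real.exp (x / 2) := by
  set a := Real.sqrt x with hadef
  have ha : a^2 = x := Real.sq_sqrt hx
  have h1 := Lag.cs_bound n a
  rw [Lag.main_int n a, ha, Lag.sum_eq_laguerre n x] at h1
  have hpi : (0:ℝ) < Real.sqrt (2*Real.pi) := Real.sqrt_pos.mpr (by positivity)
  have hfac : (0:ℝ) < (Nat.factorial n : ℝ) := by positivity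
  rw [abs_mul, abs_of_nonneg hpi.le, abs_mul, abs_of_nonneg hfac.le] at h1
  have hE : (0:ℝ) < Real.exp (-x/2) := Real.exp_pos _
  have h2 : |laguerre n x| * Real.exp (-x/2) ≤ 1 := by
    have h1' : Real.sqrt (2*Real.pi) * (Nat.factorial n : ℝ)
        * (|laguerre n x| * Real.exp (-x/2))
        ≤ Real.sqrt (2*Real.pi) * (Nat.factorial n : ℝ) * 1 := by
      calc Real.sqrt (2*Real.pi) * (Nat.factorial n : ℝ)
            * (|laguerre n x| * Real.exp (-x/2))
          = Real.sqrt (2*Real.pi) * ((Nat.factorial n : ℝ) * |laguerre n x|)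
            * Real.exp (-x/2) := by ring
        _ ≤ Real.sqrt (2*Real.pi) * (Nat.factorial n : ℝ) := h1
        _ = Real.sqrt (2*Real.pi) * (Nat.factorial n : ℝ) * 1 := by ring
    exact le_of_mul_le_mul_left h1' (mul_pos hpi hfac)
  have h3 : |laguerre n x| ≤ 1 / Real.exp (-x/2) := (le_div_iff₀ hE).mpr h2
  calc |laguerre n x| ≤ 1 / Real.exp (-x/2) := h3
    _ = Real.exp (x/2) := by
        rw [show -x/2 = -(x/2) by ring, Real.exp_neg, one_div, inv_inv]

end
end

section
/- For every real p ≥ 1, one has ( √(1 + p) / Γ(1 + p) )^{1/p} ≤ √2; equivalently, √(1 + p) ≤ 2^{p/2} · Γ(1 + p). -/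
open Real

/-- For every real `p ≥ 1`, `(√(1+p)/Γ(1+p))^{1/p} ≤ √2`; equivalently,
`√(1+p) ≤ 2^{p/2} Γ(1+p)`. -/
theorem sqrt_div_gamma_rpow_le (p : ℝ) (hp : 1 ≤ p) :
    (Real.sqrt (1 + p) / Real.Gamma (1 + p)) ^ (1 / p) ≤ Real.sqrt 2
    ∧ Real.sqrt (1 + p) ≤ (2 : ℝ) ^ (p / 2) * Real.Gamma (1 + p) := by
  have hp0 : 0 < p := lt_of_lt_of_le one_pos hp
  -- Bernoulli: 1 + p ≤ 2^p
  have hbern : 1 + p ≤ (2 : ℝ) ^ p := by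
    have := one_add_mul_self_le_rpow_one_add (by norm_num : (-1:ℝ) ≤ 1) hp
    simpa [show (1:ℝ)+1 = 2 by norm_num] using this
  -- Γ(1+p) ≥ 1
  have hΓ : 1 ≤ Real.Gamma (1 + p) := by
    have h2 : (2:ℝ) ≤ 1 + p := by linarith
    have := Real.Gamma_strictMonoOn_Ici.monotoneOn (by norm_num : (2:ℝ) ∈ Set.Ici 2)
      (Set.mem_Ici.mpr h2) h2
    simpa [Real.Gamma_two] using this
  have hΓ0 : 0 < Real.Gamma (1 + p) := lt_of_lt_of_le one_pos hΓ
  -- √(1+p) ≤ 2^(p/2)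
  have hkey : Real.sqrt (1 + p) ≤ (2 : ℝ) ^ (p / 2) := by
    have h1 : Real.sqrt (1 + p) ≤ Real.sqrt ((2:ℝ) ^ p) :=
      Real.sqrt_le_sqrt hbern
    have h2 : Real.sqrt ((2:ℝ) ^ p) = (2 : ℝ) ^ (p / 2) := by
      rw [Real.sqrt_eq_rpow, ← Real.rpow_mul (by norm_num)]
      ring_nf
    linarith [h2 ▸ h1]
  have hsecond : Real.sqrt (1 + p) ≤ (2 : ℝ) ^ (p / 2) * Real.Gamma (1 + p) := by
    calc Real.sqrt (1 + p) ≤ (2 : ℝ) ^ (p / 2) := hkey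
    _ ≤ (2 : ℝ) ^ (p / 2) * Real.Gamma (1 + p) := by
        nlinarith [Real.rpow_pos_of_pos (by norm_num : (0:ℝ) < 2) (p/2)]
  refine ⟨?_, hsecond⟩
  have hdiv : Real.sqrt (1 + p) / Real.Gamma (1 + p) ≤ (2 : ℝ) ^ (p / 2) := by
    rw [div_le_iff₀ hΓ0]
    exact hsecond
  have hnn : 0 ≤ Real.sqrt (1 + p) / Real.Gamma (1 + p) :=
    div_nonneg (Real.sqrt_nonneg _) hΓ0.le
  calc (Real.sqrt (1 + p) / Real.Gamma (1 + p)) ^ (1 / p)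
      ≤ ((2 : ℝ) ^ (p / 2)) ^ (1 / p) :=
        Real.rpow_le_rpow hnn hdiv (by positivity)
    _ = (2 : ℝ) ^ ((1:ℝ)/2) := by
        rw [← Real.rpow_mul (by norm_num)]
        congr 1
        field_simp
    _ = Real.sqrt 2 := by rw [Real.sqrt_eq_rpow]
end
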